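/- If there exist a symmetric positive definite matrix Q and a matrix R such that Q Aᵢᵀ + Aᵢ Q + Rᵀ Bᵢᵀ + Bᵢ R + 2βQ < 0 (negative definite) for all i = 1,…,N, then with K = R Q⁻¹, every matrix Aᵢ + Bᵢ K has all eigenvalues with real part strictly less than -β. -/

import Mathlib

open Matrix

lemma posdef_map_re {n : ℕ} {S : Matrix (Fin n) (Fin n) ℝ} (hS : S.PosDef)
    (v : Fin n → ℂ) (hv : v ≠ 0) :
    0 < (star v ⬝ᵥ (S.map Complex.ofReal) *ᵥ v).re := by
  set x : Fin n → ℝ := fun j => (v j).re with hx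
  set y : Fin n → ℝ := fun j => (v j).im with hy
  have key : (star v ⬝ᵥ (S.map Complex.ofReal) *ᵥ v).re
      = x ⬝ᵥ S *ᵥ x + y ⬝ᵥ S *ᵥ y := by
    simp only [dotProduct, mulVec, Pi.star_apply, Matrix.map_apply,
      Complex.re_sum, Finset.mul_sum, ← Finset.sum_add_distrib]
    refine Finset.sum_congr rfl fun j _ => ?_
    refine Finset.sum_congr rfl fun k _ => ?_
    simp only [Complex.mul_re, Complex.mul_im, RCLike.star_def, Complex.conj_re,
      Complex.conj_im, Complex.ofReal_re, Complex.ofReal_im, hx, hy]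
    ring
  have hxy : x ≠ 0 ∨ y ≠ 0 := by
    by_contra h
    push_neg at h
    apply hv
    funext j
    have h1 := congrFun h.1 j
    have h2 := congrFun h.2 j
    simp [hx, hy] at h1 h2
    exact Complex.ext h1 h2
  have hxx : 0 ≤ x ⬝ᵥ S *ᵥ x := by simpa using hS.posSemidef.dotProduct_mulVec_nonneg x
  have hyy : 0 ≤ y ⬝ᵥ S *ᵥ y := by simpa using hS.posSemidef.dotProduct_mulVec_nonneg y
  rw [key]
  rcases hxy with h | h
  · have := hS.dotProduct_mulVec_pos h; simp at this; linarith
  · have := hS.dotProduct_mulVec_pos h; simp at this; linarith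

theorem lmi_vertex_stabilization (n m N : ℕ) (β : ℝ) (hβ : 0 < β)
    (A : Fin N → Matrix (Fin n) (Fin n) ℝ) (B : Fin N → Matrix (Fin n) (Fin m) ℝ)
    (Q : Matrix (Fin n) (Fin n) ℝ) (R : Matrix (Fin m) (Fin n) ℝ)
    (hQ : Q.PosDef)
    (hLMI : ∀ i : Fin N,
      (-(Q * (A i)ᵀ + A i * Q + Rᵀ * (B i)ᵀ + B i * R + (2 * β) • Q)).PosDef) :
    ∀ i : Fin N, ∀ μ ∈ spectrum ℂ ((A i + B i * (R * Q⁻¹)).map (Complex.ofReal)),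
      μ.re < -β := by
  intro i μ hμ
  set M : Matrix (Fin n) (Fin n) ℝ := A i + B i * (R * Q⁻¹) with hM
  set P : Matrix (Fin n) (Fin n) ℝ :=
    Q * (A i)ᵀ + A i * Q + Rᵀ * (B i)ᵀ + B i * R + (2 * β) • Q with hPdef
  have hQdet : IsUnit Q.det := isUnit_iff_ne_zero.2 hQ.det_pos.ne'
  have hQs : Qᵀ = Q := by simpa [Matrix.IsSymm] using hQ.1
  -- real Lyapunov identity
  have hP : M * Q + Q * Mᵀ + (2 * β) • Q = P := by
    have h1 : M * Q = A i * Q + B i * R := by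
      rw [hM, add_mul, Matrix.mul_assoc (B i) (R * Q⁻¹) Q,
        Matrix.mul_assoc R Q⁻¹ Q, Matrix.nonsing_inv_mul Q hQdet, Matrix.mul_one]
    have h2 : Q * Mᵀ = Q * (A i)ᵀ + Rᵀ * (B i)ᵀ := by
      rw [hM, transpose_add, transpose_mul, transpose_mul, Matrix.transpose_nonsing_inv,
        hQs, mul_add]
      congr 1
      rw [← Matrix.mul_assoc, ← Matrix.mul_assoc, Matrix.mul_nonsing_inv Q hQdet,
        Matrix.one_mul]
    rw [h1, h2, hPdef]
    abel
  -- complexified matrices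
  set Mc : Matrix (Fin n) (Fin n) ℂ := M.map Complex.ofReal with hMc
  set Qc : Matrix (Fin n) (Fin n) ℂ := Q.map Complex.ofReal with hQc
  set Pc : Matrix (Fin n) (Fin n) ℂ := P.map Complex.ofReal with hPc
  have hMcH : Mcᴴ = Mᵀ.map Complex.ofReal := by
    ext j k
    simp [hMc, Matrix.conjTranspose_apply, Matrix.map_apply, Complex.conj_ofReal]
  -- eigenvector of Mcᴴ
  rw [spectrum.mem_iff] at hμ
  have hdet : (algebraMap ℂ (Matrix (Fin n) (Fin n) ℂ) μ - Mc).det = 0 := by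
    by_contra h
    exact hμ ((Matrix.isUnit_iff_isUnit_det _).2 (isUnit_iff_ne_zero.2 h))
  have hdetH : ((algebraMap ℂ (Matrix (Fin n) (Fin n) ℂ) μ - Mc)ᴴ).det = 0 := by
    rw [Matrix.det_conjTranspose, hdet, star_zero]
  obtain ⟨v, hv0, hv⟩ := (Matrix.exists_mulVec_eq_zero_iff).2 hdetH
  have heig : Mcᴴ *ᵥ v = (starRingEnd ℂ μ) • v := by
    have h1 : (algebraMap ℂ (Matrix (Fin n) (Fin n) ℂ) μ - Mc)ᴴ
        = (starRingEnd ℂ μ) • (1 : Matrix (Fin n) (Fin n) ℂ) - Mcᴴ := by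
      rw [conjTranspose_sub, Algebra.algebraMap_eq_smul_one, conjTranspose_smul,
        conjTranspose_one]
      rfl
    rw [h1, sub_mulVec, smul_mulVec, one_mulVec] at hv
    have := sub_eq_zero.mp hv
    exact this.symm
  -- key quantities
  set s : ℂ := star v ⬝ᵥ Qc *ᵥ v with hs_def
  have hs : 0 < s.re := posdef_map_re hQ v hv0
  set c : ℂ := star v ⬝ᵥ Pc *ᵥ v with hc_def
  have hc_neg : c.re < 0 := by
    have hpd := posdef_map_re (hLMI i) v hv0
    have hmapneg : (-P).map Complex.ofReal = -Pc := by
      ext j k; simp [hPc, Matrix.map_apply]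
    rw [hmapneg] at hpd
    rw [Matrix.neg_mulVec, dotProduct_neg] at hpd
    rw [hc_def]
    simpa using hpd
  -- complexified identity
  have hPcId : Pc = Mc * Qc + Qc * Mcᴴ + ((2 * β : ℝ) : ℂ) • Qc := by
    rw [hMcH, hPc, ← hP]
    ext j k
    simp only [Matrix.add_apply, Matrix.smul_apply, Matrix.mul_apply, Matrix.map_apply,
      hMc, hQc, smul_eq_mul]
    push_cast
    ring
  have hc_eq : c = (μ + starRingEnd ℂ μ + ((2 * β : ℝ) : ℂ)) * s := by
    rw [hc_def, hPcId]
    rw [Matrix.add_mulVec, Matrix.add_mulVec, dotProduct_add, dotProduct_add,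
      smul_mulVec, dotProduct_smul]
    have t1 : star v ⬝ᵥ (Mc * Qc) *ᵥ v = μ * s := by
      rw [← Matrix.mulVec_mulVec, dotProduct_mulVec]
      have : star v ᵥ* Mc = μ • star v := by
        have h := Matrix.star_mulVec (M := Mcᴴ) (v := v)
        rw [conjTranspose_conjTranspose] at h
        rw [← h, heig, star_smul]
        simp
      rw [this, smul_dotProduct, hs_def]
      simp [smul_eq_mul]
    have t2 : star v ⬝ᵥ (Qc * Mcᴴ) *ᵥ v = (starRingEnd ℂ μ) * s := by
      rw [← Matrix.mulVec_mulVec, heig, Matrix.mulVec_smul, dotProduct_smul, hs_def]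
      simp [smul_eq_mul]
    rw [t1, t2, smul_eq_mul]
    ring
  have hre : c.re = (2 * μ.re + 2 * β) * s.re := by
    have hfac : μ + starRingEnd ℂ μ + ((2 * β : ℝ) : ℂ) = ((2 * μ.re + 2 * β : ℝ) : ℂ) := by
      rw [Complex.add_conj]
      push_cast
      ring
    rw [hc_eq, hfac]
    simp [Complex.mul_re]
  rw [hre] at hc_neg
  nlinarith [hs, hc_neg]
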